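/- arXiv:math/0503392 — 3 statements merged into one kernel-verified Lean document; each statement's English description precedes it below -/
import Mathlib

section
/- Let (alpha_n)_{n\ge 0} be a real sequence and (a_n)_{n\ge 1}, (b_n)_{n\ge 1} real sequences that are (*)-related. Suppose limsup_{n\to\infty} |alpha_n|^{1/n} = R_1^{-1} < 1 and limsup_{n\to\infty} (|a_n^2-1|+|b_n|)^{1/(2n)} = R_2^{-1} < 1. Then R_1 = R_2. -/
open Filter Topology

lemma limsup_pos_bounded {g : ℕ → ℝ} {L : ℝ} (hL : L ≠ 0)
    (h : limsup g atTop = L) : IsBoundedUnder (· ≤ ·) atTop g := by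
  by_contra hb
  apply hL
  rw [← h, limsup_eq]
  have hset : {a : ℝ | ∀ᶠ n in atTop, g n ≤ a} = ∅ := by
    ext x
    simp only [Set.mem_setOf_eq, Set.mem_empty_iff_false, iff_false]
    intro hx
    exact hb ⟨x, by simpa [eventually_map] using hx⟩
  rw [hset]
  exact Real.sInf_empty

lemma ev_pow_bound {f : ℕ → ℝ} (hf : ∀ n, 0 ≤ f n) (c : ℕ) (hc : 0 < c) {L t : ℝ}
    (hL : 0 < L)
    (h : limsup (fun n => f n ^ (1 / ((c : ℝ) * n))) atTop = L) (ht : L < t) :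
    ∀ᶠ n in atTop, f n ≤ t ^ (c * n) := by
  have hb := limsup_pos_bounded hL.ne' h
  have hev : ∀ᶠ n in atTop, f n ^ (1 / ((c : ℝ) * n)) < t :=
    eventually_lt_of_limsup_lt (h ▸ ht) hb
  filter_upwards [hev, eventually_ge_atTop 1] with n h1 h2
  have hn : ((c : ℝ) * n) ≠ 0 := by
    have : (0:ℝ) < (c : ℝ) * n := by positivity
    exact this.ne'
  have key : f n = (f n ^ (1 / ((c : ℝ) * n))) ^ (c * n) := by
    rw [← Real.rpow_natCast (f n ^ (1 / ((c : ℝ) * n))) (c * n),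
      ← Real.rpow_mul (hf n)]
    push_cast
    rw [one_div, inv_mul_cancel₀ hn, Real.rpow_one]
  rw [key]
  exact pow_le_pow_left₀ (Real.rpow_nonneg (hf n) _) h1.le _

lemma limsup_le_of_geom {f : ℕ → ℝ} (hf : ∀ n, 0 ≤ f n) (c : ℕ) (hc : 0 < c)
    {C m m' : ℝ} (hm : 0 ≤ m) (hmm : m < m')
    (hev : ∀ᶠ n in atTop, f n ≤ C * m ^ (c * n)) :
    limsup (fun n => f n ^ (1 / ((c : ℝ) * n))) atTop ≤ m' := by
  have hm' : 0 < m' := lt_of_le_of_lt hm hmm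
  have hrat : m / m' < 1 := (div_lt_one hm').mpr hmm
  have hrat0 : 0 ≤ m / m' := div_nonneg hm hm'.le
  have htend : Tendsto (fun n : ℕ => C * (m / m') ^ (c * n)) atTop (𝓝 0) := by
    have h1 : Tendsto (fun k : ℕ => (m / m') ^ k) atTop (𝓝 0) :=
      tendsto_pow_atTop_nhds_zero_of_lt_one hrat0 hrat
    have h2 : Tendsto (fun n : ℕ => c * n) atTop atTop :=
      Tendsto.const_mul_atTop' hc tendsto_id
    simpa using (h1.comp h2).const_mul C
  have hev2 : ∀ᶠ n : ℕ in atTop, C * (m / m') ^ (c * n) < 1 :=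
    htend.eventually_lt_const (by norm_num)
  have hevle : ∀ᶠ n : ℕ in atTop, f n ^ (1 / ((c : ℝ) * n)) ≤ m' := by
    filter_upwards [hev, hev2, eventually_ge_atTop 1] with n h1 h2 h3
    have hcn : (0:ℝ) < (c : ℝ) * n := by positivity
    have hle : f n ≤ m' ^ (c * n) := by
      have : C * m ^ (c * n) ≤ m' ^ (c * n) := by
        have hmm' : m ^ (c * n) = (m / m') ^ (c * n) * m' ^ (c * n) := by
          rw [← mul_pow, div_mul_cancel₀ _ hm'.ne']
        rw [hmm', ← mul_assoc]
        calc C * (m / m') ^ (c * n) * m' ^ (c * n)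
            ≤ 1 * m' ^ (c * n) := by
              apply mul_le_mul_of_nonneg_right h2.le (by positivity)
          _ = m' ^ (c * n) := one_mul _
      exact h1.trans this
    calc f n ^ (1 / ((c : ℝ) * n))
        ≤ (m' ^ (c * n)) ^ (1 / ((c : ℝ) * n)) :=
          Real.rpow_le_rpow (hf n) hle (by positivity)
      _ = m' := by
          rw [← Real.rpow_natCast m' (c * n), ← Real.rpow_mul hm'.le]
          push_cast
          rw [mul_one_div, div_self hcn.ne', Real.rpow_one]
  apply limsup_le_of_le _ hevle
  exact isCoboundedUnder_le_of_le atTop (fun n => Real.rpow_nonneg (hf n) _)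

lemma tail_bound (g : ℕ → ℝ) (u v A B : ℝ) (hu : 0 ≤ u) (hu1 : u < 1)
    (hv : 0 ≤ v) (hv1 : v < 1) (hA : 0 ≤ A) (hB : 0 ≤ B)
    (hd : ∀ k, |g k - g (k + 1)| ≤ A * u ^ k + B * v ^ k)
    (hlim : Tendsto g atTop (𝓝 0)) :
    |g 0| ≤ A * (1 - u)⁻¹ + B * (1 - v)⁻¹ := by
  have key : ∀ M : ℕ, |g 0| - (A * (1 - u)⁻¹ + B * (1 - v)⁻¹) ≤ |g M| := by
    intro M
    have htel : ∑ k ∈ Finset.range M, (g k - g (k + 1)) = g 0 - g M :=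
      Finset.sum_range_sub' g M
    have h1 : |g 0 - g M| ≤ ∑ k ∈ Finset.range M, |g k - g (k + 1)| := by
      rw [← htel]
      exact Finset.abs_sum_le_sum_abs _ _
    have h2 : ∑ k ∈ Finset.range M, |g k - g (k + 1)|
        ≤ A * (1 - u)⁻¹ + B * (1 - v)⁻¹ := by
      calc ∑ k ∈ Finset.range M, |g k - g (k + 1)|
          ≤ ∑ k ∈ Finset.range M, (A * u ^ k + B * v ^ k) :=
            Finset.sum_le_sum fun k _ => hd k
        _ = A * ∑ k ∈ Finset.range M, u ^ k + B * ∑ k ∈ Finset.range M, v ^ k := by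
            rw [Finset.sum_add_distrib, Finset.mul_sum, Finset.mul_sum]
        _ ≤ A * (1 - u)⁻¹ + B * (1 - v)⁻¹ := by
            refine add_le_add ?_ ?_
            · exact mul_le_mul_of_nonneg_left
                (sum_le_hasSum _ (fun i _ => pow_nonneg hu i)
                  (hasSum_geometric_of_lt_one hu hu1)) hA
            · exact mul_le_mul_of_nonneg_left
                (sum_le_hasSum _ (fun i _ => pow_nonneg hv i)
                  (hasSum_geometric_of_lt_one hv hv1)) hB
    have := abs_sub_abs_le_abs_sub (g 0) (g M)
    have h3 : |g 0| - |g M| ≤ A * (1 - u)⁻¹ + B * (1 - v)⁻¹ :=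
      le_trans (le_trans this h1) h2
    linarith
  have : Tendsto (fun M => |g M|) atTop (𝓝 0) := by
    simpa using hlim.abs
  have hle : |g 0| - (A * (1 - u)⁻¹ + B * (1 - v)⁻¹) ≤ 0 :=
    ge_of_tendsto this (Eventually.of_forall key)
  linarith

lemma pow_nat_congr {x : ℝ} {i j : ℕ} (h : i = j) : x ^ i = x ^ j := by rw [h]

set_option maxHeartbeats 1000000 in
/-- Let `(α n)` be a real sequence and `(a n)`, `(b n)` real sequences that
are (*)-related, i.e. for all `n ≥ 0`:
`b_{n+1} = α_{2n} - α_{2n+2} - α_{2n+1}(α_{2n}+α_{2n+2})` and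
`a_{n+1}² - 1 = α_{2n+1} - α_{2n+3} - α_{2n+2}²(1-α_{2n+3})(1+α_{2n+1}) - α_{2n+3}α_{2n+1}`.
Suppose `limsup |α n|^{1/n} = R₁⁻¹ < 1` and `limsup (|aₙ²-1| + |bₙ|)^{1/(2n)} = R₂⁻¹ < 1`.
Then `R₁ = R₂`. -/
theorem rate_of_decay_preserved
    (α a b : ℕ → ℝ)
    (hrel1 : ∀ n : ℕ, b (n + 1)
      = α (2 * n) - α (2 * n + 2) - α (2 * n + 1) * (α (2 * n) + α (2 * n + 2)))
    (hrel2 : ∀ n : ℕ, (a (n + 1)) ^ 2 - 1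
      = α (2 * n + 1) - α (2 * n + 3)
        - (α (2 * n + 2)) ^ 2 * (1 - α (2 * n + 3)) * (1 + α (2 * n + 1))
        - α (2 * n + 3) * α (2 * n + 1))
    (R₁ R₂ : ℝ) (hR₁ : 1 < R₁) (hR₂ : 1 < R₂)
    (h1 : limsup (fun n : ℕ => |α n| ^ (1 / (n : ℝ))) atTop = R₁⁻¹)
    (h2 : limsup (fun n : ℕ => (|(a n) ^ 2 - 1| + |b n|) ^ (1 / (2 * (n : ℝ)))) atTop = R₂⁻¹) :
    R₁ = R₂ := by
  have hr₁0 : 0 < R₁⁻¹ := inv_pos.mpr (lt_trans one_pos hR₁)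
  have hr₁1 : R₁⁻¹ < 1 := by
    rw [inv_lt_one_iff₀]; right; exact hR₁
  have hr₂0 : 0 < R₂⁻¹ := inv_pos.mpr (lt_trans one_pos hR₂)
  have hr₂1 : R₂⁻¹ < 1 := by
    rw [inv_lt_one_iff₀]; right; exact hR₂
  set f2 : ℕ → ℝ := fun n => |(a n) ^ 2 - 1| + |b n| with hf2def
  have hf2nn : ∀ n, 0 ≤ f2 n := fun n => add_nonneg (abs_nonneg _) (abs_nonneg _)
  have h1' : limsup (fun n : ℕ => |α n| ^ (1 / (((1:ℕ) : ℝ) * n))) atTop = R₁⁻¹ := by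
    simpa using h1
  have h2' : limsup (fun n : ℕ => f2 n ^ (1 / (((2:ℕ) : ℝ) * n))) atTop = R₂⁻¹ := by
    simpa using h2
  have hsub : ∀ x y : ℝ, |x - y| ≤ |x| + |y| := fun x y => by
    simpa [sub_eq_add_neg] using abs_add_le x (-y)
  -- Step 1 : R₂⁻¹ ≤ R₁⁻¹
  have step1 : R₂⁻¹ ≤ R₁⁻¹ := by
    by_contra hcon
    push_neg at hcon
    set t := (R₁⁻¹ + R₂⁻¹) / 2 with htdef
    set t' := (t + R₂⁻¹) / 2 with ht'def
    have ht0 : 0 < t := by rw [htdef]; linarith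
    have ht1 : R₁⁻¹ < t := by rw [htdef]; linarith
    have htt' : t < t' := by rw [ht'def, htdef]; linarith
    have ht'r : t' < R₂⁻¹ := by rw [ht'def, htdef]; linarith
    have ht4 : t < 1 := by rw [htdef]; linarith
    have hα := ev_pow_bound (fun n => abs_nonneg (α n)) 1 one_pos hr₁0 h1' ht1
    obtain ⟨N, hN⟩ := eventually_atTop.1 hα
    have hN' : ∀ j, N ≤ j → |α j| ≤ t ^ j := fun j hj => by simpa using hN j hj
    have hcb : ∀ᶠ n in atTop, f2 n ≤ (11 / t ^ 2) * t ^ (2 * n) := by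
      rw [eventually_atTop]
      refine ⟨N + 1, fun n hn => ?_⟩
      obtain ⟨m, rfl⟩ : ∃ m, n = m + 1 := ⟨n - 1, by omega⟩
      have hm : N ≤ m := by omega
      have B0 := hN' (2 * m) (by omega)
      have B1 := hN' (2 * m + 1) (by omega)
      have B2 := hN' (2 * m + 2) (by omega)
      have B3 := hN' (2 * m + 3) (by omega)
      have tm : ∀ {i j : ℕ}, i ≤ j → t ^ j ≤ t ^ i :=
        fun h => pow_le_pow_of_le_one ht0.le ht4.le h
      have T1 : t ^ (2 * m) ≤ 1 := pow_le_one₀ ht0.le ht4.le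
      have Tnn : (0:ℝ) ≤ t ^ (2 * m) := by positivity
      have e1 : t ^ (2 * m + 1) ≤ t ^ (2 * m) := tm (by omega)
      have e2 : t ^ (2 * m + 2) ≤ t ^ (2 * m) := tm (by omega)
      have e3 : t ^ (2 * m + 3) ≤ t ^ (2 * m) := tm (by omega)
      have hb' : |b (m + 1)| ≤ 4 * t ^ (2 * m) := by
        rw [hrel1 m]
        calc |α (2 * m) - α (2 * m + 2) - α (2 * m + 1) * (α (2 * m) + α (2 * m + 2))|
            ≤ |α (2 * m) - α (2 * m + 2)|
              + |α (2 * m + 1) * (α (2 * m) + α (2 * m + 2))| := hsub _ _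
          _ ≤ (|α (2 * m)| + |α (2 * m + 2)|)
              + |α (2 * m + 1)| * (|α (2 * m)| + |α (2 * m + 2)|) := by
              refine add_le_add (hsub _ _) ?_
              rw [abs_mul]
              exact mul_le_mul_of_nonneg_left (abs_add_le _ _) (abs_nonneg _)
          _ ≤ 4 * t ^ (2 * m) := by
              nlinarith [abs_nonneg (α (2 * m)), abs_nonneg (α (2 * m + 1)),
                abs_nonneg (α (2 * m + 2))]
      have ha' : |(a (m + 1)) ^ 2 - 1| ≤ 7 * t ^ (2 * m) := by
        rw [hrel2 m]
        have p1 : |1 - α (2 * m + 3)| ≤ 1 + |α (2 * m + 3)| := by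
          simpa using hsub 1 (α (2 * m + 3))
        have p2 : |1 + α (2 * m + 1)| ≤ 1 + |α (2 * m + 1)| := by
          simpa using abs_add_le 1 (α (2 * m + 1))
        have hPP : |(α (2 * m + 2)) ^ 2 * (1 - α (2 * m + 3)) * (1 + α (2 * m + 1))|
            ≤ (α (2 * m + 2)) ^ 2 * (1 + |α (2 * m + 3)|) * (1 + |α (2 * m + 1)|) := by
          rw [abs_mul, abs_mul, abs_pow, sq_abs]
          gcongr
        have hsq : (α (2 * m + 2)) ^ 2 ≤ t ^ (2 * m) := by
          have h1 : (α (2 * m + 2)) ^ 2 = |α (2 * m + 2)| ^ 2 := (sq_abs _).symm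
          have h2 : |α (2 * m + 2)| ^ 2 ≤ (t ^ (2 * m + 2)) ^ 2 := by
            apply pow_le_pow_left₀ (abs_nonneg _) B2
          have h3 : (t ^ (2 * m + 2)) ^ 2 ≤ t ^ (2 * m) := by
            have := tm (show 2 * m ≤ 2 * (2 * m + 2) by omega)
            calc (t ^ (2 * m + 2)) ^ 2 = t ^ (2 * (2 * m + 2)) := by
                  rw [← pow_mul]; exact pow_nat_congr (by omega)
              _ ≤ t ^ (2 * m) := this
          linarith
        have hprod : (α (2 * m + 2)) ^ 2 * (1 + |α (2 * m + 3)|) * (1 + |α (2 * m + 1)|)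
            ≤ t ^ (2 * m) * 2 * 2 := by
          have q1 : 1 + |α (2 * m + 3)| ≤ 2 := by
            have : |α (2 * m + 3)| ≤ 1 := le_trans B3 (le_trans e3 T1)
            linarith
          have q2 : 1 + |α (2 * m + 1)| ≤ 2 := by
            have : |α (2 * m + 1)| ≤ 1 := le_trans B1 (le_trans e1 T1)
            linarith
          have r1 : (α (2 * m + 2)) ^ 2 * (1 + |α (2 * m + 3)|) ≤ t ^ (2 * m) * 2 :=
            mul_le_mul hsq q1 (by positivity) Tnn
          calc (α (2 * m + 2)) ^ 2 * (1 + |α (2 * m + 3)|) * (1 + |α (2 * m + 1)|)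
              ≤ (t ^ (2 * m) * 2) * 2 :=
                mul_le_mul r1 q2 (by positivity) (by positivity)
            _ = t ^ (2 * m) * 2 * 2 := rfl
        have hQ : |α (2 * m + 3) * α (2 * m + 1)| ≤ t ^ (2 * m) := by
          rw [abs_mul]
          have : |α (2 * m + 3)| * |α (2 * m + 1)| ≤ t ^ (2 * m) * 1 := by
            apply mul_le_mul (le_trans B3 e3) (le_trans B1 (le_trans e1 T1))
              (abs_nonneg _) Tnn
          linarith
        calc |α (2 * m + 1) - α (2 * m + 3)
              - (α (2 * m + 2)) ^ 2 * (1 - α (2 * m + 3)) * (1 + α (2 * m + 1))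
              - α (2 * m + 3) * α (2 * m + 1)|
            ≤ |α (2 * m + 1) - α (2 * m + 3)
              - (α (2 * m + 2)) ^ 2 * (1 - α (2 * m + 3)) * (1 + α (2 * m + 1))|
              + |α (2 * m + 3) * α (2 * m + 1)| := hsub _ _
          _ ≤ (|α (2 * m + 1) - α (2 * m + 3)|
              + |(α (2 * m + 2)) ^ 2 * (1 - α (2 * m + 3)) * (1 + α (2 * m + 1))|)
              + |α (2 * m + 3) * α (2 * m + 1)| :=
              add_le_add_left (hsub _ _) _
          _ ≤ ((|α (2 * m + 1)| + |α (2 * m + 3)|)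
              + (α (2 * m + 2)) ^ 2 * (1 + |α (2 * m + 3)|) * (1 + |α (2 * m + 1)|))
              + |α (2 * m + 3) * α (2 * m + 1)| :=
              add_le_add_left (add_le_add (hsub _ _) hPP) _
          _ ≤ 7 * t ^ (2 * m) := by
              have := le_trans B1 e1
              have := le_trans B3 e3
              linarith [hprod, hQ]
      have hcomb : f2 (m + 1) ≤ 11 * t ^ (2 * m) := by
        have : f2 (m + 1) = |(a (m + 1)) ^ 2 - 1| + |b (m + 1)| := rfl
        rw [this]; linarith
      have heq : (11 / t ^ 2) * t ^ (2 * (m + 1)) = 11 * t ^ (2 * m) := by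
        have h' : t ^ (2 * (m + 1)) = t ^ (2 * m) * t ^ 2 := by
          rw [← pow_add]; exact pow_nat_congr (by omega)
        rw [h']
        field_simp
      rw [heq]
      exact hcomb
    have hls := limsup_le_of_geom hf2nn 2 two_pos ht0.le htt' hcb
    rw [h2'] at hls
    linarith
  -- Step 2 : R₁⁻¹ ≤ R₂⁻¹
  have step2 : R₁⁻¹ ≤ R₂⁻¹ := by
    by_contra hcon
    push_neg at hcon
    have hsq0 := Real.sqrt_nonneg R₁⁻¹
    have hsqmul : Real.sqrt R₁⁻¹ * Real.sqrt R₁⁻¹ = R₁⁻¹ := Real.mul_self_sqrt hr₁0.le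
    have hsqrt : R₁⁻¹ < Real.sqrt R₁⁻¹ := by nlinarith
    set t := (R₁⁻¹ + Real.sqrt R₁⁻¹) / 2 with htdef
    have ht0 : 0 < t := by rw [htdef]; linarith
    have htr : R₁⁻¹ < t := by rw [htdef]; linarith
    have htsq : t < Real.sqrt R₁⁻¹ := by rw [htdef]; linarith
    have ht2 : t ^ 2 < R₁⁻¹ := by
      rw [sq, ← hsqmul]
      exact mul_self_lt_mul_self ht0.le htsq
    have ht1 : t < 1 := by nlinarith [sq_nonneg (t - 1)]
    set s := (R₂⁻¹ + R₁⁻¹) / 2 with hsdef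
    have hs0 : 0 < s := by rw [hsdef]; linarith
    have hsr2 : R₂⁻¹ < s := by rw [hsdef]; linarith
    have hsr1 : s < R₁⁻¹ := by rw [hsdef]; linarith
    have hs1 : s < 1 := by linarith
    set m := max s (t ^ 2) with hmdef
    have hm0 : 0 < m := lt_of_lt_of_le hs0 (le_max_left _ _)
    have hmr : m < R₁⁻¹ := max_lt hsr1 ht2
    set m' := (m + R₁⁻¹) / 2 with hm'def
    have hmm' : m < m' := by rw [hm'def]; linarith
    have hm'r : m' < R₁⁻¹ := by rw [hm'def]; linarith
    have hsm : s ≤ m := le_max_left _ _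
    have htm : t ^ 2 ≤ m := le_max_right _ _
    have hαe := ev_pow_bound (fun n => abs_nonneg (α n)) 1 one_pos hr₁0 h1' htr
    have hce := ev_pow_bound hf2nn 2 two_pos hr₂0 h2' hsr2
    obtain ⟨N₁, hN₁⟩ := eventually_atTop.1 hαe
    obtain ⟨N₂, hN₂⟩ := eventually_atTop.1 hce
    set N := max N₁ N₂ with hNdef
    have hαb : ∀ j, N ≤ j → |α j| ≤ t ^ j := fun j hj => by
      simpa using hN₁ j (le_trans (le_max_left _ _) hj)
    have hfb : ∀ j, N ≤ j → f2 j ≤ s ^ (2 * j) := fun j hj =>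
      hN₂ j (le_trans (le_max_right _ _) hj)
    have hbb : ∀ j, N ≤ j → |b j| ≤ s ^ (2 * j) := fun j hj => by
      have : |b j| ≤ f2 j := le_add_of_nonneg_left (abs_nonneg _)
      exact this.trans (hfb j hj)
    have hab : ∀ j, N ≤ j → |(a j) ^ 2 - 1| ≤ s ^ (2 * j) := fun j hj => by
      have : |(a j) ^ 2 - 1| ≤ f2 j := le_add_of_nonneg_right (abs_nonneg _)
      exact this.trans (hfb j hj)
    have hαlim : Tendsto α atTop (𝓝 0) := by
      apply squeeze_zero_norm' ?_ (tendsto_pow_atTop_nhds_zero_of_lt_one ht0.le ht1)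
      filter_upwards [eventually_ge_atTop N] with j hj
      simpa [Real.norm_eq_abs] using hαb j hj
    have hs2 : s ^ 2 < 1 := by nlinarith
    have ht4 : t ^ 4 < 1 := by nlinarith
    have inv1 : (0:ℝ) < (1 - s ^ 2)⁻¹ := inv_pos.mpr (by linarith)
    have inv2 : (0:ℝ) < (1 - t ^ 4)⁻¹ := inv_pos.mpr (by linarith)
    set K := (1 - s ^ 2)⁻¹ + 5 * (1 - t ^ 4)⁻¹ with hKdef
    have tmono : ∀ {i j : ℕ}, i ≤ j → t ^ j ≤ t ^ i :=
      fun h => pow_le_pow_of_le_one ht0.le ht1.le h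
    have smono : ∀ {i j : ℕ}, i ≤ j → s ^ j ≤ s ^ i :=
      fun h => pow_le_pow_of_le_one hs0.le hs1.le h
    have claim_even : ∀ n, N ≤ n → |α (2 * n)| ≤ K * m ^ (2 * n) := by
      intro n hn
      have htail := tail_bound (fun k => α (2 * (n + k))) (s ^ 2) (t ^ 4)
          (s ^ (2 * n + 2)) (2 * t ^ (4 * n + 1)) (by positivity) hs2 (by positivity)
          ht4 (by positivity) (by positivity) ?_ ?_
      rotate_left
      · intro k
        show |α (2 * (n + k)) - α (2 * (n + (k + 1)))| ≤ _
        have hidx : 2 * (n + (k + 1)) = 2 * (n + k) + 2 := by ring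
        rw [hidx]
        have hexp : α (2 * (n + k)) - α (2 * (n + k) + 2)
            = b (n + k + 1) + α (2 * (n + k) + 1) * (α (2 * (n + k)) + α (2 * (n + k) + 2)) := by
          linarith [hrel1 (n + k)]
        rw [hexp]
        calc |b (n + k + 1) + α (2 * (n + k) + 1) * (α (2 * (n + k)) + α (2 * (n + k) + 2))|
            ≤ |b (n + k + 1)|
              + |α (2 * (n + k) + 1)| * (|α (2 * (n + k))| + |α (2 * (n + k) + 2)|) := by
              refine (abs_add_le _ _).trans (add_le_add_right ?_ _)
              rw [abs_mul]
              exact mul_le_mul_of_nonneg_left (abs_add_le _ _) (abs_nonneg _)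
          _ ≤ s ^ (2 * (n + k + 1))
              + t ^ (2 * (n + k) + 1) * (t ^ (2 * (n + k)) + t ^ (2 * (n + k) + 2)) := by
              refine add_le_add (hbb (n + k + 1) (by omega)) ?_
              exact mul_le_mul (hαb _ (by omega))
                (add_le_add (hαb _ (by omega)) (hαb _ (by omega)))
                (by positivity) (by positivity)
          _ ≤ s ^ (2 * n + 2) * (s ^ 2) ^ k + 2 * t ^ (4 * n + 1) * (t ^ 4) ^ k := by
              have e1 : s ^ (2 * (n + k + 1)) = s ^ (2 * n + 2) * (s ^ 2) ^ k := by
                rw [← pow_mul, ← pow_add]; exact pow_nat_congr (by omega)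
              have e2 : t ^ (2 * (n + k) + 1) * (t ^ (2 * (n + k)) + t ^ (2 * (n + k) + 2))
                  = t ^ (4 * (n + k) + 1) + t ^ (4 * (n + k) + 3) := by
                rw [mul_add, ← pow_add, ← pow_add]
                congr 1 <;> exact pow_nat_congr (by omega)
              have e3 : (2:ℝ) * t ^ (4 * n + 1) * (t ^ 4) ^ k
                  = t ^ (4 * (n + k) + 1) + t ^ (4 * (n + k) + 1) := by
                rw [← pow_mul, mul_assoc, ← pow_add, two_mul]
                congr 1 <;> exact pow_nat_congr (by omega)
              rw [e1, e2, e3]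
              have := tmono (show 4 * (n + k) + 1 ≤ 4 * (n + k) + 3 by omega)
              linarith
      · have hmono : Tendsto (fun k : ℕ => 2 * (n + k)) atTop atTop :=
          tendsto_atTop_mono (fun k => by simp only [id_eq]; omega) tendsto_id
        exact hαlim.comp hmono
      have htail' : |α (2 * n)|
          ≤ s ^ (2 * n + 2) * (1 - s ^ 2)⁻¹ + 2 * t ^ (4 * n + 1) * (1 - t ^ 4)⁻¹ := by
        simpa using htail
      have i1 : s ^ (2 * n + 2) ≤ m ^ (2 * n) :=
        (smono (by omega)).trans (pow_le_pow_left₀ hs0.le hsm _)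
      have i2 : t ^ (4 * n + 1) ≤ m ^ (2 * n) := by
        have e : t ^ (4 * n) = (t ^ 2) ^ (2 * n) := by
          rw [← pow_mul]; exact pow_nat_congr (by omega)
        calc t ^ (4 * n + 1) ≤ t ^ (4 * n) := tmono (by omega)
          _ = (t ^ 2) ^ (2 * n) := e
          _ ≤ m ^ (2 * n) := pow_le_pow_left₀ (by positivity) htm _
      have hmn : (0:ℝ) ≤ m ^ (2 * n) := by positivity
      calc |α (2 * n)|
          ≤ s ^ (2 * n + 2) * (1 - s ^ 2)⁻¹ + 2 * t ^ (4 * n + 1) * (1 - t ^ 4)⁻¹ := htail'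
        _ ≤ m ^ (2 * n) * (1 - s ^ 2)⁻¹ + 2 * m ^ (2 * n) * (1 - t ^ 4)⁻¹ := by
            refine add_le_add (mul_le_mul_of_nonneg_right i1 inv1.le) ?_
            have h9 := mul_le_mul_of_nonneg_right i2 inv2.le
            linarith [h9]
        _ ≤ K * m ^ (2 * n) := by
            rw [hKdef]
            have h8 : ((1 - s ^ 2)⁻¹ + 5 * (1 - t ^ 4)⁻¹) * m ^ (2 * n)
                = m ^ (2 * n) * (1 - s ^ 2)⁻¹ + 5 * (m ^ (2 * n) * (1 - t ^ 4)⁻¹) := by ring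
            have h9 := mul_nonneg hmn inv2.le
            rw [h8]
            linarith [h9]
    have claim_odd : ∀ n, N ≤ n → |α (2 * n + 1)| ≤ K * m ^ (2 * n + 1) := by
      intro n hn
      have htail := tail_bound (fun k => α (2 * (n + k) + 1)) (s ^ 2) (t ^ 4)
          (s ^ (2 * n + 2)) (5 * t ^ (4 * n + 4)) (by positivity) hs2 (by positivity)
          ht4 (by positivity) (by positivity) ?_ ?_
      rotate_left
      · intro k
        show |α (2 * (n + k) + 1) - α (2 * (n + (k + 1)) + 1)| ≤ _
        have hidx : 2 * (n + (k + 1)) + 1 = 2 * (n + k) + 3 := by ring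
        rw [hidx]
        have hexp : α (2 * (n + k) + 1) - α (2 * (n + k) + 3)
            = ((a (n + k + 1)) ^ 2 - 1)
              + (α (2 * (n + k) + 2)) ^ 2 * (1 - α (2 * (n + k) + 3)) * (1 + α (2 * (n + k) + 1))
              + α (2 * (n + k) + 3) * α (2 * (n + k) + 1) := by
          linarith [hrel2 (n + k)]
        rw [hexp]
        have pα1 := hαb (2 * (n + k) + 1) (by omega)
        have pα2 := hαb (2 * (n + k) + 2) (by omega)
        have pα3 := hαb (2 * (n + k) + 3) (by omega)
        have tle1 : ∀ j : ℕ, t ^ j ≤ 1 := fun j => pow_le_one₀ ht0.le ht1.le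
        have hP : |(α (2 * (n + k) + 2)) ^ 2 * (1 - α (2 * (n + k) + 3))
            * (1 + α (2 * (n + k) + 1))| ≤ 4 * t ^ (4 * (n + k) + 4) := by
          rw [abs_mul, abs_mul, abs_pow, sq_abs]
          have p1 : |1 - α (2 * (n + k) + 3)| ≤ 2 := by
            have := hsub 1 (α (2 * (n + k) + 3))
            simp only [abs_one] at this
            linarith [pα3.trans (tle1 _)]
          have p2 : |1 + α (2 * (n + k) + 1)| ≤ 2 := by
            have := abs_add_le 1 (α (2 * (n + k) + 1))
            simp only [abs_one] at this
            linarith [pα1.trans (tle1 _)]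
          have psq : (α (2 * (n + k) + 2)) ^ 2 ≤ t ^ (4 * (n + k) + 4) := by
            have h1 : (α (2 * (n + k) + 2)) ^ 2 = |α (2 * (n + k) + 2)| ^ 2 := (sq_abs _).symm
            have h2 : |α (2 * (n + k) + 2)| ^ 2 ≤ (t ^ (2 * (n + k) + 2)) ^ 2 :=
              pow_le_pow_left₀ (abs_nonneg _) pα2 _
            have h3 : (t ^ (2 * (n + k) + 2)) ^ 2 = t ^ (4 * (n + k) + 4) := by
              rw [← pow_mul]; exact pow_nat_congr (by omega)
            linarith [h3 ▸ h2]
          calc (α (2 * (n + k) + 2)) ^ 2 * |1 - α (2 * (n + k) + 3)|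
                * |1 + α (2 * (n + k) + 1)|
              ≤ t ^ (4 * (n + k) + 4) * 2 * 2 := by
                refine mul_le_mul (mul_le_mul psq p1 (abs_nonneg _) (by positivity)) p2
                  (abs_nonneg _) (by positivity)
            _ = 4 * t ^ (4 * (n + k) + 4) := by ring
        have hQ : |α (2 * (n + k) + 3) * α (2 * (n + k) + 1)| ≤ t ^ (4 * (n + k) + 4) := by
          rw [abs_mul]
          calc |α (2 * (n + k) + 3)| * |α (2 * (n + k) + 1)|
              ≤ t ^ (2 * (n + k) + 3) * t ^ (2 * (n + k) + 1) :=
                mul_le_mul pα3 pα1 (abs_nonneg _) (by positivity)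
            _ = t ^ (4 * (n + k) + 4) := by
                rw [← pow_add]; exact pow_nat_congr (by omega)
        have hA : |(a (n + k + 1)) ^ 2 - 1| ≤ s ^ (2 * (n + k + 1)) :=
          hab (n + k + 1) (by omega)
        calc |((a (n + k + 1)) ^ 2 - 1)
              + (α (2 * (n + k) + 2)) ^ 2 * (1 - α (2 * (n + k) + 3))
                * (1 + α (2 * (n + k) + 1))
              + α (2 * (n + k) + 3) * α (2 * (n + k) + 1)|
            ≤ |((a (n + k + 1)) ^ 2 - 1)
              + (α (2 * (n + k) + 2)) ^ 2 * (1 - α (2 * (n + k) + 3))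
                * (1 + α (2 * (n + k) + 1))|
              + |α (2 * (n + k) + 3) * α (2 * (n + k) + 1)| := abs_add_le _ _
          _ ≤ (|(a (n + k + 1)) ^ 2 - 1|
              + |(α (2 * (n + k) + 2)) ^ 2 * (1 - α (2 * (n + k) + 3))
                * (1 + α (2 * (n + k) + 1))|)
              + |α (2 * (n + k) + 3) * α (2 * (n + k) + 1)| :=
              add_le_add_left (abs_add_le _ _) _
          _ ≤ (s ^ (2 * (n + k + 1)) + 4 * t ^ (4 * (n + k) + 4)) + t ^ (4 * (n + k) + 4) :=
              add_le_add (add_le_add hA hP) hQ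
          _ ≤ s ^ (2 * n + 2) * (s ^ 2) ^ k + 5 * t ^ (4 * n + 4) * (t ^ 4) ^ k := by
              have e1 : s ^ (2 * (n + k + 1)) = s ^ (2 * n + 2) * (s ^ 2) ^ k := by
                rw [← pow_mul, ← pow_add]; exact pow_nat_congr (by omega)
              have e2 : (5:ℝ) * t ^ (4 * n + 4) * (t ^ 4) ^ k = 5 * t ^ (4 * (n + k) + 4) := by
                rw [← pow_mul, mul_assoc, ← pow_add]
                congr 1
                exact pow_nat_congr (by omega)
              rw [e1, e2]
              linarith
      · have hmono : Tendsto (fun k : ℕ => 2 * (n + k) + 1) atTop atTop :=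
          tendsto_atTop_mono (fun k => by simp only [id_eq]; omega) tendsto_id
        exact hαlim.comp hmono
      have htail' : |α (2 * n + 1)|
          ≤ s ^ (2 * n + 2) * (1 - s ^ 2)⁻¹ + 5 * t ^ (4 * n + 4) * (1 - t ^ 4)⁻¹ := by
        simpa using htail
      have i1 : s ^ (2 * n + 2) ≤ m ^ (2 * n + 1) :=
        (smono (by omega)).trans (pow_le_pow_left₀ hs0.le hsm _)
      have i2 : t ^ (4 * n + 4) ≤ m ^ (2 * n + 1) := by
        have e : t ^ (4 * n + 2) = (t ^ 2) ^ (2 * n + 1) := by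
          rw [← pow_mul]; exact pow_nat_congr (by omega)
        calc t ^ (4 * n + 4) ≤ t ^ (4 * n + 2) := tmono (by omega)
          _ = (t ^ 2) ^ (2 * n + 1) := e
          _ ≤ m ^ (2 * n + 1) := pow_le_pow_left₀ (by positivity) htm _
      have hmn : (0:ℝ) ≤ m ^ (2 * n + 1) := by positivity
      calc |α (2 * n + 1)|
          ≤ s ^ (2 * n + 2) * (1 - s ^ 2)⁻¹ + 5 * t ^ (4 * n + 4) * (1 - t ^ 4)⁻¹ := htail'
        _ ≤ m ^ (2 * n + 1) * (1 - s ^ 2)⁻¹ + 5 * m ^ (2 * n + 1) * (1 - t ^ 4)⁻¹ := by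
            refine add_le_add (mul_le_mul_of_nonneg_right i1 inv1.le) ?_
            have h9 := mul_le_mul_of_nonneg_right i2 inv2.le
            linarith [h9]
        _ ≤ K * m ^ (2 * n + 1) := by
            rw [hKdef]
            have h8 : ((1 - s ^ 2)⁻¹ + 5 * (1 - t ^ 4)⁻¹) * m ^ (2 * n + 1)
                = m ^ (2 * n + 1) * (1 - s ^ 2)⁻¹ + 5 * (m ^ (2 * n + 1) * (1 - t ^ 4)⁻¹) := by
              ring
            have h9 := mul_nonneg hmn inv2.le
            rw [h8]
            linarith [h9]
    have hαall : ∀ᶠ j in atTop, |α j| ≤ K * m ^ (1 * j) := by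
      rw [eventually_atTop]
      refine ⟨2 * N + 1, fun j hj => ?_⟩
      rw [one_mul]
      rcases Nat.even_or_odd j with ⟨n, hn⟩ | ⟨n, hn⟩
      · obtain rfl : j = 2 * n := by omega
        exact claim_even n (by omega)
      · obtain rfl : j = 2 * n + 1 := by omega
        exact claim_odd n (by omega)
    have hls := limsup_le_of_geom (fun n => abs_nonneg (α n)) 1 one_pos hm0.le hmm' hαall
    rw [h1'] at hls
    linarith
  have hinv : R₁⁻¹ = R₂⁻¹ := le_antisymm step2 step1
  exact inv_injective hinv
end

section
/- Let (u,M) be a Jost pair and let z_0 with |z_0|>1 be a pole of u such that u(1/z_0)=0. Then the product u\cdot M has a pole at z_0 (indeed a pole of order at least two). -/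
open Filter Topology Complex

/-- `f` has a pole at `z`: it is meromorphic at `z` with negative order. -/
def IsPoleAt (f : ℂ → ℂ) (z : ℂ) : Prop :=
  ∃ h : MeromorphicAt f z, meromorphicOrderAt f z < 0

/-- A *Jost pair* `(u, M)`: `u` and `M` are meromorphic on `ℂ \ {0}`, real on `ℝ`,
`u` has neither zeros nor poles on the unit circle, every zero of `u` in the open unit
disk is real and simple, every pole of `M` in the open unit disk is real and simple,
the zeros of `u` in the disk coincide exactly with the poles of `M` in the disk, and
`(M(z) - M(1/z)) u(1/z) u(z) = z - z⁻¹` as an identity of meromorphic functions on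
`ℂ \ {0}` (i.e. pointwise wherever all functions involved are analytic). -/
structure IsJostPair (u M : ℂ → ℂ) : Prop where
  mero_u : ∀ z : ℂ, z ≠ 0 → MeromorphicAt u z
  mero_M : ∀ z : ℂ, z ≠ 0 → MeromorphicAt M z
  real_u : ∀ z : ℂ, z ≠ 0 → AnalyticAt ℂ u z → AnalyticAt ℂ u (starRingEnd ℂ z) →
    starRingEnd ℂ (u (starRingEnd ℂ z)) = u z
  real_M : ∀ z : ℂ, z ≠ 0 → AnalyticAt ℂ M z → AnalyticAt ℂ M (starRingEnd ℂ z) →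
    starRingEnd ℂ (M (starRingEnd ℂ z)) = M z
  circle_u : ∀ z : ℂ, ‖z‖ = 1 → AnalyticAt ℂ u z ∧ u z ≠ 0
  zeros_u_real_simple : ∀ z : ℂ, z ≠ 0 → ‖z‖ < 1 →
    AnalyticAt ℂ u z → u z = 0 → z.im = 0 ∧ deriv u z ≠ 0
  poles_M_real_simple : ∀ z : ℂ, z ≠ 0 → ‖z‖ < 1 → IsPoleAt M z →
    z.im = 0 ∧ ∃ h : MeromorphicAt M z, meromorphicOrderAt M z = (-1 : ℤ)
  zeros_eq_poles : ∀ z : ℂ, z ≠ 0 → ‖z‖ < 1 →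
    ((AnalyticAt ℂ u z ∧ u z = 0) ↔ IsPoleAt M z)
  func_eq : ∀ z : ℂ, z ≠ 0 → AnalyticAt ℂ u z → AnalyticAt ℂ u z⁻¹ →
    AnalyticAt ℂ M z → AnalyticAt ℂ M z⁻¹ →
    (M z - M z⁻¹) * u z⁻¹ * u z = z - z⁻¹

/-- `z₀` is a *noncanonical zero* of the Jost pair `(u, M)`: a zero of `u` in the open
unit disk such that `1/z₀` is not a pole of `u` and
`lim_{z → z₀} (z - z₀) M(z) ≠ -(z₀ - z₀⁻¹) [u'(z₀) u(1/z₀)]⁻¹`, this inequality being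
deemed to hold when `u(1/z₀) = 0`. -/
def IsNoncanonicalZero (u M : ℂ → ℂ) (z₀ : ℂ) : Prop :=
  z₀ ≠ 0 ∧ ‖z₀‖ < 1 ∧ AnalyticAt ℂ u z₀ ∧ u z₀ = 0 ∧
    ¬ IsPoleAt u z₀⁻¹ ∧
    (u z₀⁻¹ = 0 ∨
      ¬ Tendsto (fun z => (z - z₀) * M z) (𝓝[≠] z₀)
          (𝓝 (-(z₀ - z₀⁻¹) * (deriv u z₀ * u z₀⁻¹)⁻¹)))

/-- `P₂(u,M)`: the set of inverses of noncanonical zeros of `(u, M)`. -/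
def P2 (u M : ℂ → ℂ) : Set ℂ :=
  {w | ∃ z₀ : ℂ, IsNoncanonicalZero u M z₀ ∧ w = z₀⁻¹}

/-- `P₁(u)`: the set of poles of `u` in `{|z| > 1}`. -/
def P1 (u : ℂ → ℂ) : Set ℂ :=
  {z | 1 < ‖z‖ ∧ IsPoleAt u z}

/-- An analytic function with a simple zero (value zero, nonzero derivative) factors as
`(z - w) * G z` with `G` analytic and nonvanishing at `w`. -/
lemma analytic_simple_zero_factor {u : ℂ → ℂ} {w : ℂ} (hu : AnalyticAt ℂ u w)
    (h0 : u w = 0) (hd : deriv u w ≠ 0) :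
    ∃ G : ℂ → ℂ, AnalyticAt ℂ G w ∧ G w ≠ 0 ∧ ∀ᶠ z in 𝓝 w, u z = (z - w) * G z := by
  have hne : analyticOrderAt u w ≠ ⊤ := by
    intro htop
    have h0' : u =ᶠ[𝓝 w] (fun _ => (0 : ℂ)) := analyticOrderAt_eq_top.mp htop
    apply hd
    rw [h0'.deriv_eq]
    simp
  obtain ⟨m, hm⟩ := (WithTop.ne_top_iff_exists).mp hne
  obtain ⟨g, hgan, hgne, hgeq⟩ := (hu.analyticOrderAt_eq_natCast (n := m)).mp hm.symm
  have hgeq' : ∀ᶠ z in 𝓝 w, u z = (z - w) ^ m * g z := by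
    simpa [smul_eq_mul] using hgeq
  have hm0 : m ≠ 0 := by
    rintro rfl
    have := hgeq'.self_of_nhds
    simp only [sub_self, pow_zero, one_mul] at this
    exact hgne (this ▸ h0)
  have hm1 : m = 1 := by
    by_contra hne1
    have hm2 : 2 ≤ m := by omega
    apply hd
    have hev : u =ᶠ[𝓝 w] fun z => (z - w) ^ m * g z := hgeq'
    rw [hev.deriv_eq]
    have h1 : DifferentiableAt ℂ (fun z : ℂ => (z - w) ^ m) w :=
      ((differentiableAt_id.sub (differentiableAt_const _)).pow m)
    rw [deriv_fun_mul h1 hgan.differentiableAt]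
    have h2 : deriv (fun z : ℂ => (z - w) ^ m) w = 0 := by
      have hcomp : (fun z : ℂ => (z - w) ^ m) = (fun y : ℂ => y ^ m) ∘ (fun z : ℂ => z - w) :=
        rfl
      rw [hcomp, deriv_comp w (differentiableAt_pow m)
        (differentiableAt_fun_id.sub_const w)]
      simp [zero_pow (by omega : m - 1 ≠ 0)]
    rw [h2]
    simp [zero_pow hm0, hm0]
  subst hm1
  exact ⟨g, hgan, hgne, by simpa using hgeq'⟩

/-- Let `(u, M)` be a Jost pair and `z₀` with `|z₀| > 1` a pole of `u`
such that `u(1/z₀) = 0` (a zero of `u`).  Then `u · M` has a pole at `z₀`, indeed a pole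
of order at least two. -/

theorem pole_of_uM_at_pole_of_u_with_inverse_zero
    (u M : ℂ → ℂ) (h : IsJostPair u M) (z₀ : ℂ) (hz₀ : 1 < ‖z₀‖)
    (hpole : IsPoleAt u z₀)
    (hzero : AnalyticAt ℂ u z₀⁻¹ ∧ u z₀⁻¹ = 0) :
    IsPoleAt (fun z => u z * M z) z₀ ∧
      ∃ hm : MeromorphicAt (fun z => u z * M z) z₀, meromorphicOrderAt (fun z => u z * M z) z₀ ≤ (-2 : ℤ) := by
  -- Notation and basic facts
  have hz0ne : z₀ ≠ 0 := by
    intro hz; rw [hz, norm_zero] at hz₀; norm_num at hz₀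
  have hw0ne : z₀⁻¹ ≠ 0 := inv_ne_zero hz0ne
  have hw0lt : ‖z₀⁻¹‖ < 1 := by
    rw [norm_inv]
    exact inv_lt_one_of_one_lt₀ hz₀
  obtain ⟨hu, hult⟩ := hpole
  -- the order `a ≤ -1` of `u` at `z₀` and its local representation
  have hune : meromorphicOrderAt u z₀ ≠ ⊤ := by
    intro htop; rw [htop] at hult; exact absurd hult (by simp)
  obtain ⟨a, ha⟩ := (WithTop.ne_top_iff_exists).mp hune
  have haneg : a < 0 := by
    rw [← ha] at hult
    exact_mod_cast hult
  obtain ⟨F, hFan, hFne, hFeq⟩ := (meromorphicOrderAt_eq_int_iff hu).mp ha.symm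
  -- `M` has a simple pole at `w₀ = z₀⁻¹`
  have hpoleM : IsPoleAt M z₀⁻¹ := (h.zeros_eq_poles z₀⁻¹ hw0ne hw0lt).mp hzero
  obtain ⟨-, hMm, hMord⟩ := h.poles_M_real_simple z₀⁻¹ hw0ne hw0lt hpoleM
  obtain ⟨g, hgan, hgne, hgeq⟩ := (meromorphicOrderAt_eq_int_iff (n := -1) hMm).mp hMord
  -- `u` has a simple zero at `w₀`
  have hderiv : deriv u z₀⁻¹ ≠ 0 :=
    (h.zeros_u_real_simple z₀⁻¹ hw0ne hw0lt hzero.1 hzero.2).2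
  obtain ⟨G, hGan, hGne, hGeq⟩ := analytic_simple_zero_factor hzero.1 hzero.2 hderiv
  -- analyticity of inversion at `z₀`
  have hinvCont : ContinuousAt (fun z : ℂ => z⁻¹) z₀ := continuousAt_inv₀ hz0ne
  have hinvAn : AnalyticAt ℂ (fun z : ℂ => z⁻¹) z₀ := analyticAt_id.inv hz0ne
  -- the candidate analytic factor
  set K : ℂ → ℂ := fun z =>
    F z * (-(z * z₀) * g z⁻¹) +
      (z - z₀) ^ (-a).toNat * (z - z⁻¹) * (-(z * z₀)⁻¹ * G z⁻¹)⁻¹ with hKdef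
  have hgcomp : AnalyticAt ℂ (fun z : ℂ => g z⁻¹) z₀ := hgan.comp hinvAn
  have hGcomp : AnalyticAt ℂ (fun z : ℂ => G z⁻¹) z₀ := hGan.comp hinvAn
  have hG2ne : -(z₀ * z₀)⁻¹ * G z₀⁻¹ ≠ 0 := by
    apply mul_ne_zero
    · simpa using mul_ne_zero hz0ne hz0ne
    · exact hGne
  have hKan : AnalyticAt ℂ K z₀ := by
    apply AnalyticAt.add
    · exact hFan.mul (((analyticAt_id.mul analyticAt_const).neg).mul hgcomp)
    · exact (((analyticAt_id.sub analyticAt_const).pow _).mul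
        (analyticAt_id.sub hinvAn)).mul
        ((((analyticAt_id.mul analyticAt_const).inv
          (by simpa using mul_ne_zero hz0ne hz0ne)).neg.mul hGcomp).inv hG2ne)
  have hKne : K z₀ ≠ 0 := by
    have h1 : (z₀ - z₀) ^ (-a).toNat = 0 := by
      rw [sub_self]
      exact zero_pow (by omega)
    have : K z₀ = F z₀ * (-(z₀ * z₀) * g z₀⁻¹) := by
      rw [hKdef]; simp only [h1, zero_mul, add_zero]
    rw [this]
    exact mul_ne_zero hFne (mul_ne_zero (by simpa using mul_ne_zero hz0ne hz0ne) hgne)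
  -- the eventual identity `u z * M z = (z - z₀) ^ (a - 1) • K z` near `z₀`
  have hMan_ev : ∀ᶠ z in 𝓝[≠] z₀, AnalyticAt ℂ M z :=
    (h.mero_M z₀ hz0ne).eventually_analyticAt
  have huan_ev : ∀ᶠ z in 𝓝[≠] z₀, AnalyticAt ℂ u z := hu.eventually_analyticAt
  have huinv_ev : ∀ᶠ z in 𝓝 z₀, AnalyticAt ℂ u z⁻¹ :=
    hinvCont.eventually hzero.1.eventually_analyticAt
  have hMinv_ev : ∀ᶠ z in 𝓝 z₀, z⁻¹ ≠ z₀⁻¹ → AnalyticAt ℂ M z⁻¹ := by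
    have h1 := hMm.eventually_analyticAt
    rw [eventually_nhdsWithin_iff] at h1
    have h2 : ∀ᶠ w in 𝓝 z₀⁻¹, w ≠ z₀⁻¹ → AnalyticAt ℂ M w := by
      filter_upwards [h1] with w hw hwne
      exact hw (by simpa using hwne)
    exact hinvCont.eventually h2
  have hgrep_ev : ∀ᶠ z in 𝓝 z₀, z⁻¹ ≠ z₀⁻¹ →
      M z⁻¹ = (z⁻¹ - z₀⁻¹)⁻¹ * g z⁻¹ := by
    rw [eventually_nhdsWithin_iff] at hgeq
    have h2 : ∀ᶠ w in 𝓝 z₀⁻¹, w ≠ z₀⁻¹ → M w = (w - z₀⁻¹)⁻¹ * g w := by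
      filter_upwards [hgeq] with w hw hwne
      simpa [smul_eq_mul, zpow_neg_one] using hw (by simpa using hwne)
    exact hinvCont.eventually h2
  have hGrep_ev : ∀ᶠ z in 𝓝 z₀, u z⁻¹ = (z⁻¹ - z₀⁻¹) * G z⁻¹ :=
    hinvCont.eventually hGeq
  have hGne_ev : ∀ᶠ z in 𝓝 z₀, G z⁻¹ ≠ 0 :=
    hinvCont.eventually (hGan.continuousAt.eventually_ne hGne)
  have hFne_ev : ∀ᶠ z in 𝓝 z₀, F z ≠ 0 := hFan.continuousAt.eventually_ne hFne
  have hzne_ev : ∀ᶠ z in 𝓝 z₀, z ≠ 0 := eventually_ne_nhds hz0ne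
  have hEv : ∀ᶠ z in 𝓝[≠] z₀, u z * M z = (z - z₀) ^ (a - 1 : ℤ) • K z := by
    filter_upwards [hMan_ev, huan_ev, huinv_ev.filter_mono nhdsWithin_le_nhds,
      hMinv_ev.filter_mono nhdsWithin_le_nhds, hgrep_ev.filter_mono nhdsWithin_le_nhds,
      hGrep_ev.filter_mono nhdsWithin_le_nhds, hGne_ev.filter_mono nhdsWithin_le_nhds,
      hFne_ev.filter_mono nhdsWithin_le_nhds, hzne_ev.filter_mono nhdsWithin_le_nhds,
      hFeq, self_mem_nhdsWithin] with z hMz_an hUz_an hUinv_an hMinv_an hgrep hGrep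
        hGz hFz hz0 hUrep (hzz : z ≠ z₀)
    have hs : z - z₀ ≠ 0 := sub_ne_zero.mpr hzz
    have hinvne : z⁻¹ ≠ z₀⁻¹ := fun hc => hzz (inv_injective hc)
    have htne : z⁻¹ - z₀⁻¹ ≠ 0 := sub_ne_zero.mpr hinvne
    have hMinv := hMinv_an hinvne
    have hMrep' := hgrep hinvne
    -- pointwise functional equation
    have feq := h.func_eq z hz0 hUz_an hUinv_an hMz_an hMinv
    have hUrep' : u z = (z - z₀) ^ a * F z := by simpa [smul_eq_mul] using hUrep
    have hPne : (z - z₀) ^ a ≠ 0 := zpow_ne_zero _ hs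
    have huzne : u z ≠ 0 := by rw [hUrep']; exact mul_ne_zero hPne hFz
    have huinvne : u z⁻¹ ≠ 0 := by rw [hGrep]; exact mul_ne_zero htne hGz
    -- solve the functional equation for `M z`
    have h2 : M z - M z⁻¹ = (z - z⁻¹) * (u z⁻¹ * u z)⁻¹ := by
      rw [eq_mul_inv_iff_mul_eq₀ (mul_ne_zero huinvne huzne)]
      linear_combination feq
    have hMzval : M z = (z - z⁻¹) * (u z⁻¹ * u z)⁻¹ + M z⁻¹ := by
      linear_combination h2
    -- rewrite powers
    have hsa : (z - z₀) ^ (a - 1 : ℤ) = (z - z₀) ^ a * (z - z₀)⁻¹ := zpow_sub_one₀ hs a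
    have htn : ((z - z₀) ^ (-a).toNat : ℂ) = ((z - z₀) ^ a)⁻¹ := by
      rw [← zpow_natCast, Int.toNat_of_nonneg (by omega), zpow_neg]
    have ht : z⁻¹ - z₀⁻¹ = -((z - z₀) * (z * z₀)⁻¹) := by
      field_simp
      ring
    have hKz : K z = F z * (-(z * z₀) * g z⁻¹) +
        (z - z₀) ^ (-a).toNat * (z - z⁻¹) * (-(z * z₀)⁻¹ * G z⁻¹)⁻¹ := rfl
    have hMinvval : M z⁻¹ = -((z * z₀) * (z - z₀)⁻¹) * g z⁻¹ := by
      rw [hMrep', ht]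
      simp only [mul_inv, inv_neg, inv_inv]
      ring
    have hKinv : (-(z * z₀)⁻¹ * G z⁻¹)⁻¹ = -((z * z₀) * (G z⁻¹)⁻¹) := by
      simp only [mul_inv, inv_neg, inv_inv]
      ring
    have hcancel : u z * ((z - z⁻¹) * (u z⁻¹ * u z)⁻¹ + M z⁻¹) =
        (z - z⁻¹) * (u z⁻¹)⁻¹ + u z * M z⁻¹ := by
      rw [mul_inv]
      linear_combination (z - z⁻¹) * (u z⁻¹)⁻¹ * mul_inv_cancel₀ huzne
    have hstep : u z * M z = (z - z⁻¹) * (u z⁻¹)⁻¹ + u z * M z⁻¹ := by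
      rw [hMzval]; exact hcancel
    have huinv_inv : (u z⁻¹)⁻¹ = -((z * z₀) * (z - z₀)⁻¹) * (G z⁻¹)⁻¹ := by
      rw [hGrep, ht]
      simp only [mul_inv, inv_neg, inv_inv]
      ring
    rw [smul_eq_mul, hKz, hstep, huinv_inv, hMinvval, hKinv, hUrep', hsa, htn]
    generalize hPP : (z - z₀) ^ a = P at hPne ⊢
    linear_combination ((z - z₀)⁻¹ * (z - z⁻¹) * (z * z₀) * (G z⁻¹)⁻¹) *
      mul_inv_cancel₀ hPne
  -- conclusion
  have hmero : MeromorphicAt (fun z => u z * M z) z₀ :=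
    MeromorphicAt.iff_eventuallyEq_zpow_smul_analyticAt.mpr ⟨a - 1, K, hKan, hEv⟩
  have horder : meromorphicOrderAt (fun z => u z * M z) z₀ = ((a - 1 : ℤ) : WithTop ℤ) :=
    (meromorphicOrderAt_eq_int_iff hmero).mpr ⟨K, hKan, hKne, hEv⟩
  refine ⟨⟨hmero, ?_⟩, hmero, ?_⟩
  · rw [horder]
    exact_mod_cast (by omega : a - 1 < 0)
  · rw [horder]
    exact_mod_cast (by omega : a - 1 ≤ -2)
end

section
/- Let (u,M) and (u1,M1) be Jost pairs, let a_1>0 and b_1 be real, and suppose u1(z) = a_1 z^{-1} u(z) M(z) and M(z)^{-1} = z + z^{-1} - b_1 - a_1^2 M1(z) as identities of meromorphic functions. If z_0 with |z_0|>1 is not a pole of u1 and both z_0 and 1/z_0 are poles of M1, then z_0 is a pole of u. -/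
open Filter Topology Complex

/-- The coefficient stripping relations `u₁(z) = a₁ z⁻¹ u(z) M(z)` and
`M(z)⁻¹ = z + z⁻¹ - b₁ - a₁² M₁(z)`, as identities of meromorphic functions on
`ℂ \ {0}` (i.e. pointwise wherever all functions involved are analytic and, for the
second identity, `M` is nonvanishing). -/
def StrippingRelation (u M u1 M1 : ℂ → ℂ) (a₁ b₁ : ℝ) : Prop :=
  (∀ z : ℂ, z ≠ 0 → AnalyticAt ℂ u z → AnalyticAt ℂ M z → AnalyticAt ℂ u1 z →
    u1 z = (a₁ : ℂ) * z⁻¹ * (u z * M z)) ∧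
  (∀ z : ℂ, z ≠ 0 → AnalyticAt ℂ M z → M z ≠ 0 → AnalyticAt ℂ M1 z →
    (M z)⁻¹ = z + z⁻¹ - (b₁ : ℂ) - (a₁ : ℂ) ^ 2 * M1 z)

noncomputable def MeromorphicAt.order {f : ℂ → ℂ} {x : ℂ} (_ : MeromorphicAt f x) : WithTop ℤ :=
  meromorphicOrderAt f x

lemma MeromorphicAt.order_eq_top_iff {f : ℂ → ℂ} {x : ℂ} (hf : MeromorphicAt f x) :
    hf.order = ⊤ ↔ ∀ᶠ z in 𝓝[≠] x, f z = 0 :=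
  meromorphicOrderAt_eq_top_iff

lemma MeromorphicAt.order_eq_int_iff {f : ℂ → ℂ} {x : ℂ} (hf : MeromorphicAt f x) (n : ℤ) :
    hf.order = n ↔
      ∃ g : ℂ → ℂ, AnalyticAt ℂ g x ∧ g x ≠ 0 ∧ ∀ᶠ z in 𝓝[≠] x, f z = (z - x) ^ n • g z :=
  meromorphicOrderAt_eq_int_iff hf

noncomputable def AnalyticAt.order {f : ℂ → ℂ} {x : ℂ} (_ : AnalyticAt ℂ f x) : ENat :=
  analyticOrderAt f x

lemma AnalyticAt.order_eq_top_iff {f : ℂ → ℂ} {x : ℂ} (hf : AnalyticAt ℂ f x) :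
    hf.order = ⊤ ↔ ∀ᶠ z in 𝓝 x, f z = 0 :=
  analyticOrderAt_eq_top

lemma AnalyticAt.order_eq_nat_iff {f : ℂ → ℂ} {x : ℂ} (hf : AnalyticAt ℂ f x) (n : ℕ) :
    hf.order = n ↔
      ∃ g : ℂ → ℂ, AnalyticAt ℂ g x ∧ g x ≠ 0 ∧ ∀ᶠ z in 𝓝 x, f z = (z - x) ^ n • g z :=
  hf.analyticOrderAt_eq_natCast

lemma AnalyticAt.meromorphicAt_order {f : ℂ → ℂ} {x : ℂ} (hf : AnalyticAt ℂ f x) :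
    hf.meromorphicAt.order = hf.order.map (↑) :=
  hf.meromorphicOrderAt_eq

lemma my_order_ge_of_rep {f g : ℂ → ℂ} {x : ℂ} (hf : MeromorphicAt f x)
    (hg : AnalyticAt ℂ g x) {n : ℤ} (he : ∀ᶠ z in 𝓝[≠] x, f z = (z - x) ^ n * g z) :
    (n : WithTop ℤ) ≤ hf.order := by
  rcases eq_or_ne hg.order ⊤ with h1 | h1
  · have : ∀ᶠ z in 𝓝[≠] x, f z = 0 := by
      filter_upwards [he, (hg.order_eq_top_iff.mp h1).filter_mono nhdsWithin_le_nhds] with z h2 h3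
      rw [h2, h3, mul_zero]
    rw [hf.order_eq_top_iff.mpr this]; exact le_top
  · obtain ⟨p, hp⟩ := WithTop.ne_top_iff_exists.mp h1
    obtain ⟨gp, hgp, hgp0, hgpe⟩ := (hg.order_eq_nat_iff p).mp hp.symm
    have : hf.order = ((n + p : ℤ) : WithTop ℤ) := by
      rw [hf.order_eq_int_iff]
      refine ⟨gp, hgp, hgp0, ?_⟩
      filter_upwards [he, hgpe.filter_mono nhdsWithin_le_nhds, self_mem_nhdsWithin]
        with z h2 h3 hzx
      have hne : z - x ≠ 0 := sub_ne_zero.mpr hzx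
      rw [smul_eq_mul] at h3 ⊢
      rw [h2, h3, zpow_add₀ hne, zpow_natCast]; ring
    rw [this]
    exact_mod_cast (by omega : n ≤ n + (p : ℤ))

lemma my_rep_of_order_ge {f : ℂ → ℂ} {x : ℂ} (hf : MeromorphicAt f x) {n : ℤ}
    (h : (n : WithTop ℤ) ≤ hf.order) :
    ∃ g, AnalyticAt ℂ g x ∧ ∀ᶠ z in 𝓝[≠] x, f z = (z - x) ^ n * g z := by
  rcases eq_or_ne hf.order ⊤ with h1 | h1
  · exact ⟨fun _ => 0, analyticAt_const, by
      filter_upwards [hf.order_eq_top_iff.mp h1] with z hz; rw [hz, mul_zero]⟩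
  · obtain ⟨q, hq⟩ := WithTop.ne_top_iff_exists.mp h1
    have hnq : n ≤ q := by rw [← hq] at h; exact_mod_cast h
    obtain ⟨gq, hgq, hgq0, hgqe⟩ := (hf.order_eq_int_iff q).mp hq.symm
    refine ⟨fun z => (z - x) ^ (q - n).toNat * gq z,
      ((analyticAt_id.sub analyticAt_const).pow _).mul hgq, ?_⟩
    filter_upwards [hgqe, self_mem_nhdsWithin] with z h2 hzx
    have hne : z - x ≠ 0 := sub_ne_zero.mpr hzx
    rw [smul_eq_mul] at h2
    rw [h2, ← mul_assoc, ← zpow_natCast (z - x) (q - n).toNat,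
      Int.toNat_of_nonneg (by omega), ← zpow_add₀ hne]
    congr 2
    omega

lemma my_order_mul {f g : ℂ → ℂ} {x : ℂ} (hf : MeromorphicAt f x) (hg : MeromorphicAt g x) :
    (hf.mul hg).order = hf.order + hg.order := by
  rcases eq_or_ne hf.order ⊤ with h1 | h1
  · rw [h1, top_add, MeromorphicAt.order_eq_top_iff]
    filter_upwards [hf.order_eq_top_iff.mp h1] with z hz
    simp [Pi.mul_apply, hz]
  rcases eq_or_ne hg.order ⊤ with h2 | h2
  · rw [h2, add_top, MeromorphicAt.order_eq_top_iff]
    filter_upwards [hg.order_eq_top_iff.mp h2] with z hz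
    simp [Pi.mul_apply, hz]
  obtain ⟨m, hm⟩ := WithTop.ne_top_iff_exists.mp h1
  obtain ⟨n, hn⟩ := WithTop.ne_top_iff_exists.mp h2
  obtain ⟨gm, hgm, hgm0, hgme⟩ := (hf.order_eq_int_iff m).mp hm.symm
  obtain ⟨gn, hgn, hgn0, hgne⟩ := (hg.order_eq_int_iff n).mp hn.symm
  have : (hf.mul hg).order = ((m + n : ℤ) : WithTop ℤ) := by
    rw [MeromorphicAt.order_eq_int_iff]
    refine ⟨fun z => gm z * gn z, hgm.mul hgn, mul_ne_zero hgm0 hgn0, ?_⟩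
    filter_upwards [hgme, hgne, self_mem_nhdsWithin] with z e1 e2 hzx
    have hne : z - x ≠ 0 := sub_ne_zero.mpr hzx
    rw [smul_eq_mul] at e1 e2 ⊢
    simp only [Pi.mul_apply]
    rw [e1, e2, zpow_add₀ hne]; ring
  rw [this, ← hm, ← hn]
  push_cast
  rfl

lemma my_order_congr {f g : ℂ → ℂ} {x : ℂ} (hf : MeromorphicAt f x) (hg : MeromorphicAt g x)
    (h : ∀ᶠ z in 𝓝[≠] x, f z = g z) : hf.order = hg.order := by
  rcases eq_or_ne hg.order ⊤ with h1 | h1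
  · rw [h1, hf.order_eq_top_iff.mpr]
    filter_upwards [h, hg.order_eq_top_iff.mp h1] with z h2 h3
    rw [h2, h3]
  · obtain ⟨q, hq⟩ := WithTop.ne_top_iff_exists.mp h1
    obtain ⟨gq, hgq, hgq0, hgqe⟩ := (hg.order_eq_int_iff q).mp hq.symm
    rw [← hq]
    rw [hf.order_eq_int_iff]
    exact ⟨gq, hgq, hgq0, by filter_upwards [h, hgqe] with z e1 e2; rw [e1, e2]⟩


lemma my_analytic_zpow {f : ℂ → ℂ} {x : ℂ} (hf : AnalyticAt ℂ f x) (h0 : f x ≠ 0) (n : ℤ) :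
    AnalyticAt ℂ (fun z => f z ^ n) x := by
  cases n with
  | ofNat k => simp only [Int.ofNat_eq_coe, zpow_natCast]; exact hf.pow k
  | negSucc k => simp only [zpow_negSucc]; exact (hf.pow (k+1)).inv (pow_ne_zero _ h0)

lemma my_tendsto_inv {z₀ : ℂ} (hz : z₀ ≠ 0) :
    Tendsto (fun z : ℂ => z⁻¹) (𝓝[≠] z₀) (𝓝[≠] z₀⁻¹) := by
  rw [tendsto_nhdsWithin_iff]
  constructor
  · exact ((continuousAt_inv₀ hz).tendsto).mono_left nhdsWithin_le_nhds
  · filter_upwards [self_mem_nhdsWithin] with z hz1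
    simp only [Set.mem_compl_iff, Set.mem_singleton_iff] at hz1 ⊢
    intro hh
    exact hz1 (by rw [← inv_inv z, hh, inv_inv])

lemma my_key_inv {z z₀ : ℂ} (hz : z ≠ 0) (hz₀ : z₀ ≠ 0) :
    z⁻¹ - z₀⁻¹ = (z - z₀) * (-(z * z₀)⁻¹) := by
  field_simp
  ring

lemma my_comp_inv_mero {f : ℂ → ℂ} {z₀ : ℂ} (hz : z₀ ≠ 0) (hf : MeromorphicAt f z₀⁻¹) :
    MeromorphicAt (fun z => f z⁻¹) z₀ := by
  obtain ⟨n, g, hg, hge⟩ := MeromorphicAt.iff_eventuallyEq_zpow_smul_analyticAt.mp hf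
  have hG : AnalyticAt ℂ (fun z => (-(z * z₀)⁻¹) ^ n * g z⁻¹) z₀ := by
    refine (my_analytic_zpow ?_ ?_ n).mul (hg.comp (analyticAt_inv hz))
    · exact (((analyticAt_id.mul analyticAt_const).inv (mul_ne_zero hz hz)).neg)
    · simp [hz]
  have hev : ∀ᶠ z in 𝓝[≠] z₀, ((fun z => z - z₀) ^ n * fun z => (-(z * z₀)⁻¹) ^ n * g z⁻¹) z
      = f z⁻¹ := by
    filter_upwards [(my_tendsto_inv hz).eventually hge, self_mem_nhdsWithin,
      (eventually_ne_nhds hz).filter_mono nhdsWithin_le_nhds] with z h1 h2 h3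
    have hzz₀ : z ≠ z₀ := h2
    rw [smul_eq_mul] at h1
    simp only [Pi.mul_apply, Pi.pow_apply]
    rw [h1, my_key_inv h3 hz, mul_zpow]
    ring
  exact (((((analyticAt_id.sub analyticAt_const)).meromorphicAt).zpow n).mul
    hG.meromorphicAt).congr hev

lemma my_comp_inv_order {f : ℂ → ℂ} {z₀ : ℂ} (hz : z₀ ≠ 0) (hf : MeromorphicAt f z₀⁻¹)
    {n : ℤ} (hn : hf.order = (n : WithTop ℤ)) :
    (my_comp_inv_mero hz hf).order = (n : WithTop ℤ) := by
  obtain ⟨g, hg, hg0, hge⟩ := (hf.order_eq_int_iff n).mp hn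
  rw [MeromorphicAt.order_eq_int_iff]
  refine ⟨fun z => (-(z * z₀)⁻¹) ^ n * g z⁻¹, ?_, ?_, ?_⟩
  · refine (my_analytic_zpow ?_ ?_ n).mul (hg.comp (analyticAt_inv hz))
    · exact (((analyticAt_id.mul analyticAt_const).inv (mul_ne_zero hz hz)).neg)
    · simp [hz]
  · exact mul_ne_zero (zpow_ne_zero _ (by simp [hz])) hg0
  · filter_upwards [(my_tendsto_inv hz).eventually hge, self_mem_nhdsWithin,
      (eventually_ne_nhds hz).filter_mono nhdsWithin_le_nhds] with z h1 h2 h3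
    have hzz₀ : z ≠ z₀ := h2
    rw [smul_eq_mul] at h1 ⊢
    rw [h1, my_key_inv h3 hz, mul_zpow]
    ring

lemma my_comp_inv_top {f : ℂ → ℂ} {z₀ : ℂ} (hz : z₀ ≠ 0) (hf : MeromorphicAt f z₀⁻¹)
    (hn : hf.order = ⊤) : (my_comp_inv_mero hz hf).order = ⊤ := by
  rw [MeromorphicAt.order_eq_top_iff]
  exact (my_tendsto_inv hz).eventually (hf.order_eq_top_iff.mp hn)

/-- Let `(u, M)` and `(u₁, M₁)` be Jost pairs related by coefficient
stripping with `a₁ > 0`, `b₁ ∈ ℝ`.  If `z₀` with `|z₀| > 1` is not a pole of `u₁` and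
both `z₀` and `1/z₀` are poles of `M₁`, then `z₀` is a pole of `u`. -/
theorem pole_of_u_of_P2_of_stripped
    (u M u1 M1 : ℂ → ℂ) (h : IsJostPair u M) (h1 : IsJostPair u1 M1)
    (a₁ b₁ : ℝ) (ha₁ : 0 < a₁) (hstrip : StrippingRelation u M u1 M1 a₁ b₁)
    (z₀ : ℂ) (hz₀ : 1 < ‖z₀‖)
    (hnp : ¬ IsPoleAt u1 z₀) (hp : IsPoleAt M1 z₀) (hp' : IsPoleAt M1 z₀⁻¹) :
    IsPoleAt u z₀ := by
  have hz0 : z₀ ≠ 0 := by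
    intro hh; rw [hh] at hz₀; simp only [norm_zero] at hz₀; linarith
  have hx0 : z₀⁻¹ ≠ 0 := inv_ne_zero hz0
  have habs_pos : (0:ℝ) < ‖z₀‖ := lt_trans one_pos hz₀
  have hxlt : ‖z₀⁻¹‖ < 1 := by
    rw [norm_inv]
    exact (inv_lt_one₀ habs_pos).mpr hz₀
  have hmU1 : MeromorphicAt u1 z₀ := h1.mero_u z₀ hz0
  have hmM1 : MeromorphicAt M1 z₀ := h1.mero_M z₀ hz0
  have hmU1x : MeromorphicAt u1 z₀⁻¹ := h1.mero_u _ hx0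
  have hmM1x : MeromorphicAt M1 z₀⁻¹ := h1.mero_M _ hx0
  have hmU : MeromorphicAt u z₀ := h.mero_u z₀ hz0
  have hmM : MeromorphicAt M z₀ := h.mero_M z₀ hz0
  have htend := my_tendsto_inv hz0
  -- order of M1 at z₀ : an integer j < 0
  obtain ⟨hpm, hporder0⟩ := hp
  have hporder : hmM1.order < 0 := hporder0
  have hne_top : hmM1.order ≠ ⊤ := by
    intro hh; rw [hh] at hporder; exact (not_top_lt hporder)
  obtain ⟨j, hj⟩ := WithTop.ne_top_iff_exists.mp hne_top
  have hjneg : j < 0 := by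
    rw [← hj] at hporder; exact_mod_cast hporder
  -- M1 has a simple pole at z₀⁻¹
  obtain ⟨-, hmm9, hord9⟩ := h1.poles_M_real_simple z₀⁻¹ hx0 hxlt hp'
  have hMord1 : hmM1x.order = ((-1:ℤ) : WithTop ℤ) := hord9
  -- u1 has a zero at z₀⁻¹
  obtain ⟨hu1xa, hu1x0⟩ := (h1.zeros_eq_poles z₀⁻¹ hx0 hxlt).mpr hp'
  -- meromorphy of compositions with inversion
  have hmCM1 : MeromorphicAt (fun z => M1 z⁻¹) z₀ := my_comp_inv_mero hz0 hmM1x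
  have hmCu1 : MeromorphicAt (fun z => u1 z⁻¹) z₀ := my_comp_inv_mero hz0 hmU1x
  have hCM1ord : hmCM1.order = ((-1:ℤ) : WithTop ℤ) := my_comp_inv_order hz0 hmM1x hMord1
  have hmD : MeromorphicAt (M1 - fun z => M1 z⁻¹) z₀ := hmM1.sub hmCM1
  have hmF : MeromorphicAt ((M1 - fun z => M1 z⁻¹) * ((fun z => u1 z⁻¹) * u1)) z₀ :=
    hmD.mul (hmCu1.mul hmU1)
  -- eventual facts near z₀
  have ev0 : ∀ᶠ z in 𝓝[≠] z₀, z ≠ (0:ℂ) :=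
    (eventually_ne_nhds hz0).filter_mono nhdsWithin_le_nhds
  have evAu1 : ∀ᶠ z in 𝓝[≠] z₀, AnalyticAt ℂ u1 z := hmU1.eventually_analyticAt
  have evAM1 : ∀ᶠ z in 𝓝[≠] z₀, AnalyticAt ℂ M1 z := hmM1.eventually_analyticAt
  have evAu : ∀ᶠ z in 𝓝[≠] z₀, AnalyticAt ℂ u z := hmU.eventually_analyticAt
  have evAM : ∀ᶠ z in 𝓝[≠] z₀, AnalyticAt ℂ M z := hmM.eventually_analyticAt
  have evAu1i : ∀ᶠ z in 𝓝[≠] z₀, AnalyticAt ℂ u1 z⁻¹ :=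
    htend.eventually hmU1x.eventually_analyticAt
  have evAM1i : ∀ᶠ z in 𝓝[≠] z₀, AnalyticAt ℂ M1 z⁻¹ :=
    htend.eventually hmM1x.eventually_analyticAt
  -- the order of the functional-equation product is 0
  have hFord : hmF.order = ((0:ℤ) : WithTop ℤ) := by
    rw [hmF.order_eq_int_iff]
    refine ⟨fun z => z - z⁻¹, analyticAt_id.sub (analyticAt_id.inv hz0), ?_, ?_⟩
    · intro hc
      rw [sub_eq_zero] at hc
      have h1' : ‖z₀‖ = ‖z₀‖⁻¹ := by rw [← norm_inv, ← hc]
      nlinarith [mul_inv_cancel₀ (ne_of_gt habs_pos)]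
    · filter_upwards [ev0, evAu1, evAM1, evAu1i, evAM1i] with z h0 a1 a2 a3 a4
      have hfe := h1.func_eq z h0 a1 a3 a2 a4
      simp only [Pi.mul_apply, Pi.sub_apply, zpow_zero, one_smul]
      rw [← hfe, mul_assoc]
  have hFsplit : hmF.order = hmD.order + (hmCu1.order + hmU1.order) := by
    rw [my_order_mul hmD (hmCu1.mul hmU1), my_order_mul hmCu1 hmU1]
  rw [hFsplit] at hFord
  -- the order of u1 at z₀⁻¹ is a positive integer p
  rcases eq_or_ne hu1xa.order ⊤ with hT | hT
  · exfalso
    have htop : hmU1x.order = ⊤ := by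
      rw [show hmU1x.order = hu1xa.meromorphicAt.order from rfl, hu1xa.meromorphicAt_order, hT]
      rfl
    have hCtop : hmCu1.order = ⊤ := my_comp_inv_top hz0 hmU1x htop
    rw [hCtop, top_add, add_top] at hFord
    simp at hFord
  obtain ⟨p, hpord⟩ := WithTop.ne_top_iff_exists.mp hT
  have hp1 : 1 ≤ p := by
    rcases Nat.eq_zero_or_pos p with hz' | h'; swap
    · exact h'
    exfalso
    rw [hz'] at hpord
    obtain ⟨gp, hgp, hgp0, hgpe⟩ := (hu1xa.order_eq_nat_iff 0).mp hpord.symm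
    have hself := hgpe.self_of_nhds
    simp only [sub_self, pow_zero, one_smul] at hself
    rw [hself] at hu1x0
    exact hgp0 hu1x0
  have hU1xord : hmU1x.order = ((p:ℤ) : WithTop ℤ) := by
    rw [show hmU1x.order = hu1xa.meromorphicAt.order from rfl, hu1xa.meromorphicAt_order, ← hpord]
    rfl
  have hCord : hmCu1.order = ((p:ℤ) : WithTop ℤ) := my_comp_inv_order hz0 hmU1x hU1xord
  rw [hCord] at hFord
  -- lower bound for the order of M1 - M1∘inv
  obtain ⟨g1, hg1, hg10, hg1e⟩ := (hmM1.order_eq_int_iff j).mp hj.symm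
  obtain ⟨g2, hg2, hg2e⟩ := my_rep_of_order_ge hmCM1 (n := j)
    (by rw [hCM1ord]; exact_mod_cast (by omega : j ≤ (-1:ℤ)))
  have hDge : (j : WithTop ℤ) ≤ hmD.order := by
    refine my_order_ge_of_rep hmD (hg1.sub hg2) ?_
    filter_upwards [hg1e, hg2e] with z e1 e2
    simp only [Pi.sub_apply]
    rw [smul_eq_mul] at e1
    rw [e1, e2]; ring
  -- extract integer orders
  have hDne : hmD.order ≠ ⊤ := by
    intro hh; rw [hh, top_add] at hFord; simp at hFord
  have hU1ne : hmU1.order ≠ ⊤ := by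
    intro hh; rw [hh, add_top, add_top] at hFord; simp at hFord
  obtain ⟨dd, hdd⟩ := WithTop.ne_top_iff_exists.mp hDne
  obtain ⟨mm, hmm⟩ := WithTop.ne_top_iff_exists.mp hU1ne
  rw [← hdd, ← hmm] at hFord
  have heq : dd + ((p:ℤ) + mm) = 0 := by exact_mod_cast hFord
  have hddj : j ≤ dd := by rw [← hdd] at hDge; exact_mod_cast hDge
  have hmm0 : 0 ≤ mm := by
    have h5 : ¬ hmU1.order < 0 := fun hc => hnp ⟨hmU1, hc⟩
    rw [← hmm] at h5
    exact_mod_cast not_lt.mp h5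
  -- first stripping relation: order of u1 = order of u + order of M at z₀
  have hG1a : AnalyticAt ℂ (fun z : ℂ => (a₁:ℂ) * z⁻¹) z₀ :=
    analyticAt_const.mul (analyticAt_id.inv hz0)
  have hmG1 := hG1a.meromorphicAt
  have hmP : MeromorphicAt ((fun z : ℂ => (a₁:ℂ) * z⁻¹) * (u * M)) z₀ := hmG1.mul (hmU.mul hmM)
  have hcong : hmU1.order = hmP.order := by
    refine my_order_congr hmU1 hmP ?_
    filter_upwards [ev0, evAu, evAM, evAu1] with z h0 a b c
    simp only [Pi.mul_apply]
    exact hstrip.1 z h0 a b c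
  have hG1ord : hmG1.order = ((0:ℤ) : WithTop ℤ) := by
    rw [hmG1.order_eq_int_iff]
    refine ⟨fun z : ℂ => (a₁:ℂ) * z⁻¹, hG1a,
      mul_ne_zero (by exact_mod_cast ne_of_gt ha₁) (inv_ne_zero hz0), ?_⟩
    filter_upwards with z
    simp
  have hPord : hmP.order = hmU.order + hmM.order := by
    rw [my_order_mul hmG1 (hmU.mul hmM), my_order_mul hmU hmM, hG1ord]
    norm_num
  rw [hPord, ← hmm] at hcong
  -- the order of M at z₀ is finite
  have hMne : hmM.order ≠ ⊤ := by
    intro hh; rw [hh, add_top] at hcong; simp at hcong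
  obtain ⟨K, hK⟩ := WithTop.ne_top_iff_exists.mp hMne
  obtain ⟨gM, hgM, hgM0, hgMe⟩ := (hmM.order_eq_int_iff K).mp hK.symm
  have evMne : ∀ᶠ z in 𝓝[≠] z₀, M z ≠ 0 := by
    filter_upwards [hgMe, self_mem_nhdsWithin,
      (hgM.continuousAt.eventually_ne hgM0).filter_mono nhdsWithin_le_nhds] with z e1 e2 e3
    rw [smul_eq_mul] at e1
    rw [e1]
    exact mul_ne_zero (zpow_ne_zero _ (sub_ne_zero.mpr e2)) e3
  -- second stripping relation: order of M at z₀ equals -j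
  have hAa : AnalyticAt ℂ (fun z : ℂ => z + z⁻¹ - (b₁:ℂ)) z₀ :=
    (analyticAt_id.add (analyticAt_id.inv hz0)).sub analyticAt_const
  have meroR : MeromorphicAt (fun z : ℂ => z + z⁻¹ - (b₁:ℂ) - (a₁:ℂ)^2 * M1 z) z₀ := by
    exact hAa.meromorphicAt.sub (analyticAt_const.meromorphicAt.mul hmM1)
  have hSord : (hmM.mul meroR).order = ((0:ℤ) : WithTop ℤ) := by
    rw [MeromorphicAt.order_eq_int_iff]
    refine ⟨fun _ => 1, analyticAt_const, one_ne_zero, ?_⟩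
    filter_upwards [ev0, evAM, evAM1, evMne] with z h0 a b c
    have hrel2 := hstrip.2 z h0 a c b
    simp only [Pi.mul_apply, zpow_zero, one_smul]
    rw [← hrel2, mul_inv_cancel₀ c]
  have hRord : meroR.order = (j : WithTop ℤ) := by
    rw [MeromorphicAt.order_eq_int_iff]
    refine ⟨fun z => (z - z₀)^((-j).toNat) * (z + z⁻¹ - (b₁:ℂ)) - (a₁:ℂ)^2 * g1 z, ?_, ?_, ?_⟩
    · exact (((analyticAt_id.sub analyticAt_const).pow _).mul hAa).sub
        (analyticAt_const.mul hg1)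
    · show (z₀ - z₀) ^ (-j).toNat * (z₀ + z₀⁻¹ - (b₁:ℂ)) - (a₁:ℂ)^2 * g1 z₀ ≠ 0
      have h9 : ((z₀ - z₀) ^ (-j).toNat : ℂ) = 0 := by
        rw [sub_self]; exact zero_pow (by omega)
      rw [h9, zero_mul, zero_sub]
      exact neg_ne_zero.mpr (mul_ne_zero (pow_ne_zero _ (by exact_mod_cast ne_of_gt ha₁)) hg10)
    · filter_upwards [hg1e, self_mem_nhdsWithin] with z e1 e2
      have hne : z - z₀ ≠ 0 := sub_ne_zero.mpr (e2 : z ≠ z₀)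
      rw [smul_eq_mul] at e1 ⊢
      have hw : ((z - z₀):ℂ)^(j:ℤ) ≠ 0 := zpow_ne_zero _ hne
      rw [e1, show ((z - z₀):ℂ)^((-j).toNat) = ((z - z₀)^(j:ℤ))⁻¹ from by
        rw [← zpow_natCast, Int.toNat_of_nonneg (by omega), zpow_neg]]
      field_simp
      try ring
  have hKj : K = -j := by
    have h7 := my_order_mul hmM meroR
    rw [hSord, hRord, ← hK] at h7
    have h7' : (0:ℤ) = K + j := by exact_mod_cast h7
    omega
  -- conclude
  rw [← hK] at hcong
  have hUne : hmU.order ≠ ⊤ := by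
    intro hh; rw [hh, top_add] at hcong; simp at hcong
  obtain ⟨vu, hvu⟩ := WithTop.ne_top_iff_exists.mp hUne
  rw [← hvu] at hcong
  have hfin : mm = vu + K := by exact_mod_cast hcong
  refine ⟨hmU, ?_⟩
  show hmU.order < 0
  rw [← hvu]
  have hp1' : (1:ℤ) ≤ (p:ℤ) := by exact_mod_cast hp1
  have hvuneg : vu < 0 := by omega
  exact_mod_cast hvuneg
end
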